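/- Let {U_{xa} : x, a ∈ {0,…,d−1}} be a partitioned unitary error basis on ℂ^d, with partition {I} ⊔ C_* ⊔ C_0 ⊔ ⋯ ⊔ C_{d−1} into classes of d−1 commuting unitaries each (which together with I form maximal commuting classes of d operators). For each class, let B^i be an orthonormal basis of common eigenvectors of the operators in that class. Then the resulting d+1 orthonormal bases B^*, B^0, …, B^{d−1} are pairwise mutually unbiased, hence form a maximal family of mutually unbiased bases of ℂ^d. -/

import Mathlib

open Matrix Finset

private lemma inner_sum_eq {d : ℕ} (B : OrthonormalBasis (Fin d) ℂ (EuclideanSpace ℂ (Fin d)))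
    (j k : Fin d) :
    ∑ m, (starRingEnd ℂ) (B j m) * B k m = if j = k then 1 else 0 := by
  have h := orthonormal_iff_ite.mp B.orthonormal j k
  simpa [PiLp.inner_apply, RCLike.inner_apply, mul_comm] using h

private lemma mem_span_of_eigen {d : ℕ} (hd0 : (d : ℂ) ≠ 0)
    (B : OrthonormalBasis (Fin d) ℂ (EuclideanSpace ℂ (Fin d)))
    (f : Fin d → Matrix (Fin d) (Fin d) ℂ)
    (horth : ∀ a b, ((f a)ᴴ * f b).trace = if a = b then (d : ℂ) else 0)
    (heig : ∀ a j, ∃ μ : ℂ, (f a).mulVec (B j) = fun m => μ * B j m)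
    (j : Fin d) :
    ∃ c : Fin d → ℂ, ∑ a, c a • f a
      = vecMulVec (fun m => B j m) (fun n => (starRingEnd ℂ) (B j n)) := by
  classical
  set T : Matrix (Fin d) (Fin d) ℂ := Matrix.of fun m j => B j m with hTdef
  have hTT : Tᴴ * T = 1 := by
    ext a b
    simp only [Matrix.mul_apply, Matrix.conjTranspose_apply, Matrix.one_apply, hTdef,
      Matrix.of_apply]
    simpa using inner_sum_eq B a b
  have hTT' : T * Tᴴ = 1 := mul_eq_one_comm.mp hTT
  let Φ : (Fin d → ℂ) →ₗ[ℂ] Matrix (Fin d) (Fin d) ℂ :=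
    (LinearMap.mulRight ℂ Tᴴ) ∘ₗ (LinearMap.mulLeft ℂ T) ∘ₗ
      (Matrix.diagonalLinearMap (Fin d) ℂ ℂ)
  have hΦapp : ∀ c : Fin d → ℂ, Φ c = T * Matrix.diagonal c * Tᴴ := fun _ => rfl
  have hΦrec : ∀ c : Fin d → ℂ, Tᴴ * (Φ c) * T = Matrix.diagonal c := by
    intro c
    rw [hΦapp, ← Matrix.mul_assoc, ← Matrix.mul_assoc, hTT, Matrix.one_mul,
      Matrix.mul_assoc, hTT, Matrix.mul_one]
  have hΦinj : Function.Injective Φ := by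
    intro c c' h
    have h2 := congrArg (fun X => Tᴴ * X * T) h
    simp only [hΦrec] at h2
    exact Matrix.diagonal_injective h2
  have hmemf : ∀ a, f a ∈ LinearMap.range Φ := by
    intro a
    choose μ hμ using heig a
    refine ⟨μ, ?_⟩
    have h1 : f a * T = T * Matrix.diagonal μ := by
      ext m n
      have hL : (f a * T) m n = ((f a).mulVec (B n)) m := by
        simp [Matrix.mul_apply, Matrix.mulVec, dotProduct, hTdef]
      rw [hL, hμ n]
      simp [Matrix.mul_diagonal, hTdef, mul_comm]
    rw [hΦapp, ← h1, Matrix.mul_assoc, hTT', Matrix.mul_one]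
  have hmemP : vecMulVec (fun m => B j m) (fun n => (starRingEnd ℂ) (B j n))
      ∈ LinearMap.range Φ := by
    refine ⟨Pi.single j 1, ?_⟩
    rw [hΦapp]
    ext m n
    rw [Matrix.mul_apply]
    simp only [Matrix.mul_diagonal, Matrix.conjTranspose_apply, Pi.single_apply]
    rw [Finset.sum_eq_single j]
    · simp only [Matrix.vecMulVec_apply, hTdef, Matrix.of_apply, if_true, mul_one,
        starRingEnd_apply]
    · intro b _ hb; simp [hb]
    · simp
  have hli : LinearIndependent ℂ f := by
    rw [Fintype.linearIndependent_iff]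
    intro c hc b
    have h1 : ((f b)ᴴ * (∑ a, c a • f a)).trace = c b * d := by
      rw [Finset.mul_sum, Matrix.trace_sum]
      simp only [Matrix.mul_smul, Matrix.trace_smul, horth, smul_eq_mul, mul_ite, mul_zero]
      rw [Finset.sum_ite_eq]
      simp [mul_comm]
    rw [hc] at h1
    simp only [Matrix.mul_zero, Matrix.trace_zero] at h1
    exact (mul_eq_zero.mp h1.symm).resolve_right hd0
  have hsub : Submodule.span ℂ (Set.range f) ≤ LinearMap.range Φ := by
    rw [Submodule.span_le]; rintro _ ⟨a, rfl⟩; exact hmemf a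
  have hrk1 : Module.finrank ℂ (Submodule.span ℂ (Set.range f)) = d := by
    rw [finrank_span_eq_card hli]; simp
  have hrk2 : Module.finrank ℂ (LinearMap.range Φ) = d := by
    rw [LinearMap.finrank_range_of_inj hΦinj]; simp
  have hspan : Submodule.span ℂ (Set.range f) = LinearMap.range Φ :=
    Submodule.eq_of_le_of_finrank_le hsub (by rw [hrk1, hrk2])
  have hP : vecMulVec (fun m => B j m) (fun n => (starRingEnd ℂ) (B j n))
      ∈ Submodule.span ℂ (Set.range f) := hspan ▸ hmemP
  exact (Submodule.mem_span_range_iff_exists_fun ℂ).mp hP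

private lemma coeff_at_one {d : ℕ} (hd0 : (d : ℂ) ≠ 0) (z : Fin d)
    (f : Fin d → Matrix (Fin d) (Fin d) ℂ) (hfz : f z = 1)
    (horth : ∀ a b, ((f a)ᴴ * f b).trace = if a = b then (d : ℂ) else 0)
    (c : Fin d → ℂ) (P : Matrix (Fin d) (Fin d) ℂ)
    (hP : ∑ a, c a • f a = P) (htrP : P.trace = 1) :
    c z = 1 / d := by
  have h2 : ((f z)ᴴ * P).trace = c z * d := by
    rw [← hP, Finset.mul_sum, Matrix.trace_sum]
    simp only [Matrix.mul_smul, Matrix.trace_smul, horth, smul_eq_mul, mul_ite, mul_zero]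
    rw [Finset.sum_ite_eq]
    simp [mul_comm]
  rw [hfz, Matrix.conjTranspose_one, Matrix.one_mul, htrP] at h2
  field_simp
  linear_combination -h2

private lemma mub_of_classes {d : ℕ} (hd0 : (d : ℂ) ≠ 0) (z : Fin d)
    (B C : OrthonormalBasis (Fin d) ℂ (EuclideanSpace ℂ (Fin d)))
    (f g : Fin d → Matrix (Fin d) (Fin d) ℂ)
    (hfz : f z = 1) (hgz : g z = 1)
    (horthf : ∀ a b, ((f a)ᴴ * f b).trace = if a = b then (d : ℂ) else 0)
    (horthg : ∀ a b, ((g a)ᴴ * g b).trace = if a = b then (d : ℂ) else 0)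
    (hcross : ∀ a b, ((f a)ᴴ * g b).trace = if a = z ∧ b = z then (d : ℂ) else 0)
    (heigf : ∀ a j, ∃ μ : ℂ, (f a).mulVec (B j) = fun m => μ * B j m)
    (heigg : ∀ a j, ∃ μ : ℂ, (g a).mulVec (C j) = fun m => μ * C j m)
    (j k : Fin d) :
    ‖(inner ℂ (B j) (C k) : ℂ)‖ ^ 2 = 1 / (d : ℝ) := by
  classical
  obtain ⟨c, hc⟩ := mem_span_of_eigen hd0 B f horthf heigf j
  obtain ⟨e, he⟩ := mem_span_of_eigen hd0 C g horthg heigg k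
  set v : Fin d → ℂ := fun m => B j m with hv
  set w : Fin d → ℂ := fun m => C k m with hw
  set Pv : Matrix (Fin d) (Fin d) ℂ := vecMulVec v (fun n => (starRingEnd ℂ) (v n)) with hPv
  set Pw : Matrix (Fin d) (Fin d) ℂ := vecMulVec w (fun n => (starRingEnd ℂ) (w n)) with hPw
  have htrv : Pv.trace = 1 := by
    have h := inner_sum_eq B j j
    rw [if_pos rfl] at h
    rw [Matrix.trace]
    simp only [Matrix.diag_apply, hPv, Matrix.vecMulVec_apply]
    rw [← h]
    exact Finset.sum_congr rfl fun m _ => mul_comm _ _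
  have htrw : Pw.trace = 1 := by
    have h := inner_sum_eq C k k
    rw [if_pos rfl] at h
    rw [Matrix.trace]
    simp only [Matrix.diag_apply, hPw, Matrix.vecMulVec_apply]
    rw [← h]
    exact Finset.sum_congr rfl fun m _ => mul_comm _ _
  have hcz : c z = 1 / d := coeff_at_one hd0 z f hfz horthf c Pv hc htrv
  have hez : e z = 1 / d := coeff_at_one hd0 z g hgz horthg e Pw he htrw
  have hPvH : Pvᴴ = Pv := by
    ext m n
    simp only [Matrix.conjTranspose_apply, hPv, Matrix.vecMulVec_apply, star_mul',
      starRingEnd_apply, star_star]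
    exact mul_comm _ _
  -- side 1 : trace (Pvᴴ * Pw) as a product of sums
  have hA : (Pvᴴ * Pw).trace
      = (∑ m, v m * (starRingEnd ℂ) (w m)) * (∑ n, (starRingEnd ℂ) (v n) * w n) := by
    rw [hPvH, Matrix.trace]
    simp only [Matrix.diag_apply, Matrix.mul_apply, hPv, hPw, Matrix.vecMulVec_apply]
    rw [Finset.sum_mul_sum]
    exact Finset.sum_congr rfl fun m _ => Finset.sum_congr rfl fun n _ => by ring
  -- side 2 : trace (Pvᴴ * Pw) via the expansions
  have hB : (Pvᴴ * Pw).trace = (starRingEnd ℂ) (c z) * e z * d := by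
    rw [← hc, ← he, Matrix.conjTranspose_sum]
    simp only [Matrix.conjTranspose_smul]
    rw [Finset.sum_mul_sum]
    rw [Matrix.trace_sum]
    simp only [Matrix.trace_sum, Matrix.smul_mul, Matrix.mul_smul, Matrix.trace_smul,
      smul_smul, smul_eq_mul, hcross, mul_ite, mul_zero]
    rw [Finset.sum_eq_single z]
    · rw [Finset.sum_eq_single z]
      · rw [if_pos (⟨rfl, rfl⟩ : z = z ∧ z = z), starRingEnd_apply]; ring
      · intro b _ hb; simp [hb]
      · simp
    · intro a _ ha
      apply Finset.sum_eq_zero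
      intro b _
      simp [ha]
    · simp
  have hzconj : (∑ m, v m * (starRingEnd ℂ) (w m))
      = (starRingEnd ℂ) (∑ n, (starRingEnd ℂ) (v n) * w n) := by
    rw [map_sum]
    exact Finset.sum_congr rfl fun n _ => by
      rw [_root_.map_mul, Complex.conj_conj]
  have hinner : (inner ℂ (B j) (C k) : ℂ) = ∑ n, (starRingEnd ℂ) (v n) * w n := by
    simp [PiLp.inner_apply, RCLike.inner_apply, hv, hw, mul_comm]
  set ζ : ℂ := ∑ n, (starRingEnd ℂ) (v n) * w n with hζ
  have hkey : (starRingEnd ℂ) ζ * ζ = 1 / (d : ℂ) := by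
    have h1 : (starRingEnd ℂ) ζ * ζ = (starRingEnd ℂ) (c z) * e z * d := by
      rw [← hzconj, ← hA, hB]
    rw [h1, hcz, hez, map_div₀, _root_.map_one, Complex.conj_natCast]
    field_simp
  have hnormsq : ((‖ζ‖ ^ 2 : ℝ) : ℂ) = 1 / (d : ℂ) := by
    rw [← hkey, mul_comm, Complex.mul_conj, Complex.normSq_eq_norm_sq]
  have h2 : ((‖ζ‖ ^ 2 : ℝ) : ℂ) = ((1 / (d : ℝ) : ℝ) : ℂ) := by
    rw [hnormsq]; push_cast; ring
  rw [hinner]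
  exact Complex.ofReal_inj.mp h2

/-- Let `{U x a}` be a partitioned unitary error basis on `ℂ^d`: the `U x a` are `d²`
unitaries, orthogonal with respect to the trace inner product, `U 0 0 = I`, the class
`C_* = {U x 0 : x ≠ 0}` pairwise commutes, and each class `C i = {U i k : k ≠ 0}`
pairwise commutes.  If `Bstar` is an orthonormal basis of common eigenvectors of the
class `C_*` and `Bs i` is an orthonormal basis of common eigenvectors of the class `C i`,
then the resulting `d + 1` orthonormal bases are pairwise mutually unbiased, hence form a
maximal family of mutually unbiased bases of `ℂ^d`. -/
theorem partitioned_ueb_gives_maximal_mubs (d : ℕ) (hd : 0 < d)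
    (U : Fin d → Fin d → Matrix (Fin d) (Fin d) ℂ)
    (hunit : ∀ x a, U x a ∈ Matrix.unitaryGroup (Fin d) ℂ)
    (htr : ∀ x a y b, Matrix.trace ((U x a).conjTranspose * U y b)
      = if x = y ∧ a = b then (d : ℂ) else 0)
    (hId : U ⟨0, hd⟩ ⟨0, hd⟩ = 1)
    (hstarComm : ∀ x y, U x ⟨0, hd⟩ * U y ⟨0, hd⟩ = U y ⟨0, hd⟩ * U x ⟨0, hd⟩)
    (hclassComm : ∀ i k l, k ≠ ⟨0, hd⟩ → l ≠ ⟨0, hd⟩ →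
      U i k * U i l = U i l * U i k)
    (Bstar : OrthonormalBasis (Fin d) ℂ (EuclideanSpace ℂ (Fin d)))
    (Bs : Fin d → OrthonormalBasis (Fin d) ℂ (EuclideanSpace ℂ (Fin d)))
    (hBstar : ∀ x, x ≠ (⟨0, hd⟩ : Fin d) → ∀ j, ∃ μ : ℂ,
      (U x ⟨0, hd⟩).mulVec (Bstar j) = fun m => μ * Bstar j m)
    (hBs : ∀ i k, k ≠ (⟨0, hd⟩ : Fin d) → ∀ j, ∃ μ : ℂ,
      (U i k).mulVec (Bs i j) = fun m => μ * Bs i j m) :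
    (∀ i j k, ‖(inner ℂ (Bstar j) (Bs i k) : ℂ)‖ ^ 2 = 1 / (d : ℝ)) ∧
    (∀ i m, i ≠ m → ∀ j k, ‖(inner ℂ (Bs i j) (Bs m k) : ℂ)‖ ^ 2 = 1 / (d : ℝ)) := by
  classical
  have hd0 : (d : ℂ) ≠ 0 := Nat.cast_ne_zero.mpr hd.ne'
  set z : Fin d := ⟨0, hd⟩ with hz
  -- the star class (indexed by x, containing the identity at x = z)
  set fs : Fin d → Matrix (Fin d) (Fin d) ℂ := fun x => U x z with hfs
  -- class i (indexed by a, with the identity slotted in at a = z)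
  set fc : Fin d → Fin d → Matrix (Fin d) (Fin d) ℂ :=
    fun i a => if a = z then U z z else U i a with hfc
  have hfsz : fs z = 1 := hId
  have hfcz : ∀ i, fc i z = 1 := fun i => by simp [hfc, hId]
  -- orthogonality of the star class
  have horths : ∀ a b, ((fs a)ᴴ * fs b).trace = if a = b then (d : ℂ) else 0 := by
    intro a b
    rw [hfs]
    simp [htr]
  -- orthogonality of class i
  have horthc : ∀ i a b, ((fc i a)ᴴ * fc i b).trace = if a = b then (d : ℂ) else 0 := by
    intro i a b
    rcases eq_or_ne a z with ha | ha <;> rcases eq_or_ne b z with hb | hb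
    · simp [hfc, ha, hb, htr]
    · simp [hfc, ha, hb, htr, Ne.symm hb]
    · simp [hfc, ha, hb, htr]
    · simp [hfc, ha, hb, htr]
  -- cross orthogonality : star class vs class i
  have hcross1 : ∀ i a b, ((fs a)ᴴ * fc i b).trace = if a = z ∧ b = z then (d : ℂ) else 0 := by
    intro i a b
    rcases eq_or_ne b z with hb | hb
    · simp [hfs, hfc, hb, htr]
    · simp [hfs, hfc, hb, htr, Ne.symm hb]
  -- cross orthogonality : class i vs class m, i ≠ m
  have hcross2 : ∀ i m, i ≠ m → ∀ a b,
      ((fc i a)ᴴ * fc m b).trace = if a = z ∧ b = z then (d : ℂ) else 0 := by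
    intro i m him a b
    rcases eq_or_ne a z with ha | ha <;> rcases eq_or_ne b z with hb | hb
    · simp [hfc, ha, hb, htr]
    · simp [hfc, ha, hb, htr, Ne.symm hb]
    · simp [hfc, ha, hb, htr]
    · simp [hfc, ha, hb, htr, him]
  -- eigenvector property for the star class
  have heigs : ∀ a j, ∃ μ : ℂ, (fs a).mulVec (Bstar j) = fun m => μ * Bstar j m := by
    intro a j
    by_cases ha : a = z
    · subst ha
      refine ⟨1, ?_⟩
      rw [hfsz, Matrix.one_mulVec]
      funext m; simp
    · exact hBstar a ha j
  -- eigenvector property for class i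
  have heigc : ∀ i a j, ∃ μ : ℂ, (fc i a).mulVec (Bs i j) = fun m => μ * Bs i j m := by
    intro i a j
    by_cases ha : a = z
    · subst ha
      refine ⟨1, ?_⟩
      rw [hfcz i, Matrix.one_mulVec]
      funext m; simp
    · have h1 : fc i a = U i a := if_neg ha
      rw [h1]
      exact hBs i a ha j
  constructor
  · intro i j k
    exact mub_of_classes hd0 z Bstar (Bs i) fs (fc i) hfsz (hfcz i)
      horths (horthc i) (hcross1 i) heigs (heigc i) j k
  · intro i m him j k
    exact mub_of_classes hd0 z (Bs i) (Bs m) (fc i) (fc m) (hfcz i) (hfcz m)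
      (horthc i) (horthc m) (hcross2 i m him) (heigc i) (heigc m) j k
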